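/- arXiv:2202.10790 — 2 statements merged into one kernel-verified Lean document; each statement's English description precedes it below -/
import Mathlib

section
/- Let V, X, Y₁, S₁, Y₂, S₂ be discrete random variables on a finite probability space such that V → X → (Y₁,S₁) → (Y₂,S₂) forms a Markov chain and V is independent of (S₁,S₂). Then H(V | Y₂, S₂) ≥ H(V | Y₁, S₁), and hence [I(V;Y₁|S₁) − I(V;Y₂|S₂)]⁺ = H(V|Y₂,S₂) − H(V|Y₁,S₁), where [a]⁺ = max{a,0}. -/
open Finset

/-- Probability that a discrete random variable `X` takes value `x`,
under the probability mass function `μ` on a finite sample space. -/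
noncomputable def prob {Ω α : Type*} [Fintype Ω] [DecidableEq α]
    (μ : Ω → ℝ) (X : Ω → α) (x : α) : ℝ :=
  ∑ ω ∈ Finset.univ.filter (fun ω => X ω = x), μ ω

/-- `μ` is a probability mass function on the finite sample space `Ω`. -/
def IsPMF {Ω : Type*} [Fintype Ω] (μ : Ω → ℝ) : Prop :=
  (∀ ω, 0 ≤ μ ω) ∧ ∑ ω, μ ω = 1

/-- Shannon entropy (natural log) of a discrete random variable. -/
noncomputable def entH {Ω α : Type*} [Fintype Ω] [Fintype α] [DecidableEq α]
    (μ : Ω → ℝ) (X : Ω → α) : ℝ :=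
  ∑ x, -(prob μ X x * Real.log (prob μ X x))

/-- Conditional Shannon entropy `H(X | Y)`. -/
noncomputable def condH {Ω α β : Type*} [Fintype Ω] [Fintype α] [DecidableEq α]
    [Fintype β] [DecidableEq β] (μ : Ω → ℝ) (X : Ω → α) (Y : Ω → β) : ℝ :=
  entH μ (fun ω => (X ω, Y ω)) - entH μ Y

/-- Mutual information `I(X; Y)`. -/
noncomputable def mutInfo {Ω α β : Type*} [Fintype Ω] [Fintype α] [DecidableEq α]
    [Fintype β] [DecidableEq β] (μ : Ω → ℝ) (X : Ω → α) (Y : Ω → β) : ℝ :=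
  entH μ X + entH μ Y - entH μ (fun ω => (X ω, Y ω))

/-- Conditional mutual information `I(X; Y | Z)`. -/
noncomputable def condMutInfo {Ω α β γ : Type*} [Fintype Ω] [Fintype α] [DecidableEq α]
    [Fintype β] [DecidableEq β] [Fintype γ] [DecidableEq γ]
    (μ : Ω → ℝ) (X : Ω → α) (Y : Ω → β) (Z : Ω → γ) : ℝ :=
  condH μ X Z + condH μ Y Z - condH μ (fun ω => (X ω, Y ω)) Z

/-- `X` and `Y` are independent random variables under `μ`. -/
def IndepRV {Ω α β : Type*} [Fintype Ω] [DecidableEq α] [DecidableEq β]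
    (μ : Ω → ℝ) (X : Ω → α) (Y : Ω → β) : Prop :=
  ∀ x y, prob μ (fun ω => (X ω, Y ω)) (x, y) = prob μ X x * prob μ Y y

/-- `A → B → C` forms a Markov chain under `μ`:
`P(A,B,C) P(B) = P(A,B) P(B,C)` pointwise. -/
def MarkovChain {Ω α β γ : Type*} [Fintype Ω] [DecidableEq α] [DecidableEq β] [DecidableEq γ]
    (μ : Ω → ℝ) (A : Ω → α) (B : Ω → β) (C : Ω → γ) : Prop :=
  ∀ a b c, prob μ (fun ω => (A ω, B ω, C ω)) (a, b, c) * prob μ B b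
    = prob μ (fun ω => (A ω, B ω)) (a, b) * prob μ (fun ω => (B ω, C ω)) (b, c)

/-- Binary entropy function (natural log). -/
noncomputable def binEnt (x : ℝ) : ℝ :=
  -(x * Real.log x) - ((1 - x) * Real.log (1 - x))

section Tool
variable {Ω α β γ : Type*} [Fintype Ω]

lemma prob_nonneg' [DecidableEq α] {μ : Ω → ℝ} (hμ : ∀ ω, 0 ≤ μ ω) (X : Ω → α) (x : α) :
    0 ≤ prob μ X x := Finset.sum_nonneg fun _ _ => hμ _

lemma marg [Fintype α] [DecidableEq α] [DecidableEq β] (μ : Ω → ℝ) (X : Ω → α) (f : α → β)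
    (b : β) : prob μ (fun ω => f (X ω)) b = ∑ x ∈ univ.filter (fun x => f x = b), prob μ X x := by
  unfold prob
  rw [Finset.sum_fiberwise_eq_sum_filter univ (univ.filter (fun x => f x = b)) X μ]
  congr 1
  ext ω
  simp

lemma pushsum [Fintype α] [DecidableEq α] [Fintype β] [DecidableEq β] (μ : Ω → ℝ) (X : Ω → α)
    (f : α → β) (F : β → ℝ) :
    ∑ b, prob μ (fun ω => f (X ω)) b * F b = ∑ x, prob μ X x * F (f x) := by
  simp_rw [marg, Finset.sum_mul]
  have h1 : ∀ b : β, ∑ x ∈ univ.filter (fun x => f x = b), prob μ X x * F b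
      = ∑ x ∈ univ.filter (fun x => f x = b), prob μ X x * F (f x) :=
    fun b => Finset.sum_congr rfl fun x hx => by rw [(Finset.mem_filter.mp hx).2]
  rw [Finset.sum_congr rfl fun b _ => h1 b,
    Finset.sum_fiberwise_eq_sum_filter univ univ f (fun x => prob μ X x * F (f x))]
  simp
lemma prob_comp_inj [Fintype α] [DecidableEq α] [DecidableEq β] (μ : Ω → ℝ) (X : Ω → α)
    {f : α → β} (hf : Function.Injective f) (x : α) :
    prob μ (fun ω => f (X ω)) (f x) = prob μ X x := by
  rw [marg]
  have h : univ.filter (fun x' => f x' = f x) = {x} := by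
    ext y; simp [hf.eq_iff]
  rw [h, Finset.sum_singleton]

lemma prob_comp_le [Fintype α] [DecidableEq α] [DecidableEq β] {μ : Ω → ℝ} (hμ : ∀ ω, 0 ≤ μ ω)
    (X : Ω → α) (f : α → β) (x : α) :
    prob μ X x ≤ prob μ (fun ω => f (X ω)) (f x) := by
  rw [marg μ X f (f x)]
  exact Finset.single_le_sum (fun i _ => prob_nonneg' hμ X i) (by simp)

lemma prob_pair_sum [DecidableEq α] [Fintype β] [DecidableEq β] (μ : Ω → ℝ) (Z : Ω → α)
    (U : Ω → β) (z : α) :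
    prob μ Z z = ∑ d, prob μ (fun ω => (U ω, Z ω)) (d, z) := by
  unfold prob
  have h1 : ∀ d : β, (univ.filter (fun ω => (U ω, Z ω) = (d, z)))
      = (univ.filter (fun ω => Z ω = z)).filter (fun ω => U ω = d) := by
    intro d; ext ω
    simp only [Finset.mem_filter, Finset.mem_univ, true_and, Prod.mk.injEq]
    tauto
  calc ∑ ω ∈ univ.filter (fun ω => Z ω = z), μ ω
      = ∑ d : β, ∑ ω ∈ (univ.filter (fun ω => Z ω = z)).filter (fun ω => U ω = d), μ ω := by
        rw [Finset.sum_fiberwise_eq_sum_filter (univ.filter (fun ω => Z ω = z)) univ U μ]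
        simp
    _ = ∑ d : β, ∑ ω ∈ univ.filter (fun ω => (U ω, Z ω) = (d, z)), μ ω :=
        Finset.sum_congr rfl fun d _ => by rw [h1 d]

lemma sum_prob_eq_one [Fintype α] [DecidableEq α] {μ : Ω → ℝ} (hμ : IsPMF μ) (X : Ω → α) :
    ∑ x, prob μ X x = 1 := by
  unfold prob
  rw [Finset.sum_fiberwise_eq_sum_filter univ univ X μ]
  simpa using hμ.2

end Tool

section Tool2
variable {Ω α β γ : Type*} [Fintype Ω]

lemma entH_comp_inj [Fintype α] [DecidableEq α] [Fintype β] [DecidableEq β] (μ : Ω → ℝ)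
    (X : Ω → α) {f : α → β} (hf : Function.Injective f) :
    entH μ (fun ω => f (X ω)) = entH μ X := by
  unfold entH
  have h1 : ∀ b : β, -(prob μ (fun ω => f (X ω)) b * Real.log (prob μ (fun ω => f (X ω)) b))
      = prob μ (fun ω => f (X ω)) b * (-Real.log (prob μ (fun ω => f (X ω)) b)) := by
    intro b; ring
  rw [Finset.sum_congr rfl fun b _ => h1 b,
    pushsum μ X f (fun b => -Real.log (prob μ (fun ω => f (X ω)) b))]
  exact Finset.sum_congr rfl fun x _ => by rw [prob_comp_inj μ X hf x]; ring

lemma gibbs {ι : Type*} [Fintype ι] (p q : ι → ℝ) (hp : ∀ i, 0 ≤ p i) (hq : ∀ i, 0 ≤ q i)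
    (hpq : ∀ i, q i = 0 → p i = 0) (hsum : ∑ i, q i ≤ ∑ i, p i) :
    ∑ i, p i * Real.log (q i) ≤ ∑ i, p i * Real.log (p i) := by
  have key : ∀ i, p i * Real.log (q i) - p i * Real.log (p i) ≤ q i - p i := by
    intro i
    rcases eq_or_lt_of_le (hp i) with h0 | h0
    · simp [← h0]; exact hq i
    · have hq0 : 0 < q i := lt_of_le_of_ne (hq i) fun h => by
        have := hpq i h.symm; linarith
      have hd : 0 < q i / p i := div_pos hq0 h0
      have := Real.log_le_sub_one_of_pos hd
      rw [Real.log_div (ne_of_gt hq0) (ne_of_gt h0)] at this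
      have h2 : p i * (Real.log (q i) - Real.log (p i)) ≤ p i * (q i / p i - 1) :=
        mul_le_mul_of_nonneg_left this (le_of_lt h0)
      rw [mul_sub, mul_sub, mul_div_cancel₀ _ (ne_of_gt h0)] at h2
      linarith
  have := Finset.sum_le_sum (fun i (_ : i ∈ univ) => key i)
  rw [Finset.sum_sub_distrib, Finset.sum_sub_distrib] at this
  linarith

lemma indep_entH [Fintype α] [DecidableEq α] [Fintype β] [DecidableEq β] {μ : Ω → ℝ}
    (hμ : IsPMF μ) {A : Ω → α} {B : Ω → β}
    (h : ∀ a b, prob μ (fun ω => (A ω, B ω)) (a, b) = prob μ A a * prob μ B b) :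
    entH μ (fun ω => (A ω, B ω)) = entH μ A + entH μ B := by
  unfold entH
  rw [Fintype.sum_prod_type]
  have key : ∀ a b, -(prob μ (fun ω => (A ω, B ω)) (a, b)
        * Real.log (prob μ (fun ω => (A ω, B ω)) (a, b)))
      = prob μ B b * -(prob μ A a * Real.log (prob μ A a))
        + prob μ A a * -(prob μ B b * Real.log (prob μ B b)) := by
    intro a b
    rw [h a b]
    rcases eq_or_ne (prob μ A a) 0 with h0 | h0
    · simp [h0]
    rcases eq_or_ne (prob μ B b) 0 with h1 | h1
    · simp [h1]
    rw [Real.log_mul h0 h1]; ring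
  rw [Finset.sum_congr rfl fun a _ => Finset.sum_congr rfl fun b _ => key a b]
  have hA := sum_prob_eq_one hμ A
  have hB := sum_prob_eq_one hμ B
  simp only [Finset.sum_add_distrib, ← Finset.mul_sum, ← Finset.sum_mul]
  rw [hA, hB]; ring

end Tool2

section CMI
variable {Ω α β γ : Type*} [Fintype Ω] [Fintype α] [DecidableEq α]
  [Fintype β] [DecidableEq β] [Fintype γ] [DecidableEq γ]

lemma cmi_both (μ : Ω → ℝ) (hμ : IsPMF μ) (A : Ω → α) (B : Ω → β) (C : Ω → γ) :
    0 ≤ entH μ (fun ω => (A ω, B ω)) + entH μ (fun ω => (B ω, C ω))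
        - entH μ (fun ω => (A ω, B ω, C ω)) - entH μ B
    ∧ (MarkovChain μ A B C →
      entH μ (fun ω => (A ω, B ω)) + entH μ (fun ω => (B ω, C ω))
        - entH μ (fun ω => (A ω, B ω, C ω)) - entH μ B = 0) := by
  set T : Ω → α × β × γ := fun ω => (A ω, B ω, C ω) with hT
  set p : α × β × γ → ℝ := prob μ T with hp
  set pAB : α × β → ℝ := prob μ (fun ω => (A ω, B ω)) with hpAB
  set pBC : β × γ → ℝ := prob μ (fun ω => (B ω, C ω)) with hpBC
  set pB : β → ℝ := prob μ B with hpB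
  set q : α × β × γ → ℝ := fun i => pAB (i.1, i.2.1) * pBC i.2 / pB i.2.1 with hq
  -- entropy rewrites over the master index
  have e1 : entH μ (fun ω => (A ω, B ω))
      = ∑ i : α × β × γ, p i * (-Real.log (pAB (i.1, i.2.1))) := by
    calc entH μ (fun ω => (A ω, B ω))
        = ∑ y : α × β, pAB y * (-Real.log (pAB y)) :=
          Finset.sum_congr rfl fun y _ => by ring
      _ = _ := pushsum μ T (fun i : α × β × γ => (i.1, i.2.1)) (fun y => -Real.log (pAB y))
  have e2 : entH μ (fun ω => (B ω, C ω))
      = ∑ i : α × β × γ, p i * (-Real.log (pBC i.2)) := by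
    calc entH μ (fun ω => (B ω, C ω))
        = ∑ y : β × γ, pBC y * (-Real.log (pBC y)) :=
          Finset.sum_congr rfl fun y _ => by ring
      _ = _ := pushsum μ T (fun i : α × β × γ => i.2) (fun y => -Real.log (pBC y))
  have e3 : entH μ B = ∑ i : α × β × γ, p i * (-Real.log (pB i.2.1)) := by
    calc entH μ B
        = ∑ y : β, pB y * (-Real.log (pB y)) :=
          Finset.sum_congr rfl fun y _ => by ring
      _ = _ := pushsum μ T (fun i : α × β × γ => i.2.1) (fun y => -Real.log (pB y))
  have eT : entH μ T = ∑ i : α × β × γ, p i * (-Real.log (p i)) :=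
    Finset.sum_congr rfl fun y _ => by ring
  -- dominations
  have dAB : ∀ i : α × β × γ, p i ≤ pAB (i.1, i.2.1) :=
    fun i => prob_comp_le hμ.1 T (fun i : α × β × γ => (i.1, i.2.1)) i
  have dBC : ∀ i : α × β × γ, p i ≤ pBC i.2 :=
    fun i => prob_comp_le hμ.1 T (fun i : α × β × γ => i.2) i
  have dB : ∀ i : α × β × γ, p i ≤ pB i.2.1 :=
    fun i => prob_comp_le hμ.1 T (fun i : α × β × γ => i.2.1) i
  have dABB : ∀ y : α × β, pAB y ≤ pB y.2 :=
    fun y => prob_comp_le hμ.1 (fun ω => (A ω, B ω)) (fun y : α × β => y.2) y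
  have pnn : ∀ i, 0 ≤ p i := fun i => prob_nonneg' hμ.1 T i
  have pABnn : ∀ y, 0 ≤ pAB y := fun y => prob_nonneg' hμ.1 _ y
  have pBCnn : ∀ y, 0 ≤ pBC y := fun y => prob_nonneg' hμ.1 _ y
  have pBnn : ∀ y, 0 ≤ pB y := fun y => prob_nonneg' hμ.1 _ y
  have qnn : ∀ i, 0 ≤ q i := fun i =>
    div_nonneg (mul_nonneg (pABnn _) (pBCnn _)) (pBnn _)
  -- marginal sums
  have mAB : ∀ b : β, ∑ a, pAB (a, b) = pB b := fun b => (prob_pair_sum μ B A b).symm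
  have mBC : ∀ b : β, ∑ c, pBC (b, c) = pB b := by
    intro b
    have h1 : ∀ c : γ, pBC (b, c) = prob μ (fun ω => (C ω, B ω)) (c, b) := fun c => by
      exact prob_comp_inj μ (fun ω => (C ω, B ω)) Prod.swap_injective (c, b)
    rw [Finset.sum_congr rfl fun c _ => h1 c]
    exact (prob_pair_sum μ B C b).symm
  -- sum of q equals 1
  have hqsum : ∑ i : α × β × γ, q i = 1 := by
    rw [Fintype.sum_prod_type]
    have inner : ∀ (a : α) (b : β), (∑ c : γ, q (a, b, c)) = pAB (a, b) := by
      intro a b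
      have : (∑ c : γ, q (a, b, c)) = pAB (a, b) / pB b * ∑ c, pBC (b, c) := by
        rw [Finset.mul_sum]
        exact Finset.sum_congr rfl fun c _ => by rw [hq]; ring
      rw [this, mBC b]
      rcases eq_or_ne (pB b) 0 with h0 | h0
      · have hA0 : pAB (a, b) = 0 := le_antisymm (h0 ▸ dABB (a, b)) (pABnn _)
        simp [h0, hA0]
      · field_simp
    calc ∑ a, ∑ i : β × γ, q (a, i) = ∑ a, ∑ b, ∑ c, q (a, b, c) := by
          exact Finset.sum_congr rfl fun a _ => Fintype.sum_prod_type _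
      _ = ∑ a, ∑ b, pAB (a, b) := by
          exact Finset.sum_congr rfl fun a _ => Finset.sum_congr rfl fun b _ => inner a b
      _ = ∑ y : α × β, pAB y := (Fintype.sum_prod_type _).symm
      _ = 1 := sum_prob_eq_one hμ _
  -- q vanishing forces p vanishing
  have hq0 : ∀ i, q i = 0 → p i = 0 := by
    intro i h0
    rcases eq_or_ne (pB i.2.1) 0 with hb | hb
    · exact le_antisymm (hb ▸ dB i) (pnn i)
    · rw [hq, div_eq_zero_iff] at h0
      rcases h0 with h0 | h0
      · rcases mul_eq_zero.mp h0 with h0 | h0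
        · exact le_antisymm (h0 ▸ dAB i) (pnn i)
        · exact le_antisymm (h0 ▸ dBC i) (pnn i)
      · exact absurd h0 hb
  -- per-term log expansion
  have hterm : ∀ i : α × β × γ, p i * Real.log (q i)
      = p i * (Real.log (pAB (i.1, i.2.1)) + Real.log (pBC i.2) - Real.log (pB i.2.1)) := by
    intro i
    rcases eq_or_ne (p i) 0 with h0 | h0
    · simp [h0]
    · have hpi : 0 < p i := lt_of_le_of_ne (pnn i) (Ne.symm h0)
      have h1 : 0 < pAB (i.1, i.2.1) := lt_of_lt_of_le hpi (dAB i)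
      have h2 : 0 < pBC i.2 := lt_of_lt_of_le hpi (dBC i)
      have h3 : 0 < pB i.2.1 := lt_of_lt_of_le hpi (dB i)
      rw [hq, Real.log_div (mul_ne_zero (ne_of_gt h1) (ne_of_gt h2)) (ne_of_gt h3),
        Real.log_mul (ne_of_gt h1) (ne_of_gt h2)]
  -- the key identity
  have key : entH μ (fun ω => (A ω, B ω)) + entH μ (fun ω => (B ω, C ω))
      - entH μ T - entH μ B
      = ∑ i : α × β × γ, (p i * Real.log (p i) - p i * Real.log (q i)) := by
    rw [e1, e2, e3, eT, ← Finset.sum_add_distrib, ← Finset.sum_sub_distrib,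
      ← Finset.sum_sub_distrib]
    exact Finset.sum_congr rfl fun i _ => by rw [hterm i]; ring
  constructor
  · rw [key]
    have := gibbs p q pnn qnn hq0 (by rw [hqsum, sum_prob_eq_one hμ T])
    rw [Finset.sum_sub_distrib]
    linarith
  · intro hM
    rw [key]
    apply Finset.sum_eq_zero
    intro i _
    rcases eq_or_ne (p i) 0 with h0 | h0
    · simp [h0]
    · have hpi : 0 < p i := lt_of_le_of_ne (pnn i) (Ne.symm h0)
      have h3 : 0 < pB i.2.1 := lt_of_lt_of_le hpi (dB i)
      have hMi := hM i.1 i.2.1 i.2.2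
      have hqi : q i = p i := by
        rw [hq]
        have : p i = prob μ (fun ω => (A ω, B ω, C ω)) (i.1, i.2.1, i.2.2) := by
          rw [hp, hT]
        rw [this] at hpi ⊢
        field_simp
        linarith [hMi]
      rw [hqi]; ring

end CMI

section Marg
variable {Ω α α' β γ : Type*} [Fintype Ω] [Fintype α] [DecidableEq α]
  [Fintype α'] [DecidableEq α'] [Fintype β] [DecidableEq β] [Fintype γ] [DecidableEq γ]

lemma markov_fst (μ : Ω → ℝ) (A : Ω → α) (A' : Ω → α') (B : Ω → β) (C : Ω → γ)
    (h : MarkovChain μ (fun ω => (A ω, A' ω)) B C) : MarkovChain μ A B C := by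
  intro a b c
  have hf1 : Function.Injective
      (fun y : α' × (α × β × γ) => ((y.2.1, y.1), y.2.2.1, y.2.2.2)) := by
    rintro ⟨u1, u2, u3, u4⟩ ⟨v1, v2, v3, v4⟩ hy
    simp_all [Prod.ext_iff]
  have hf2 : Function.Injective
      (fun y : α' × (α × β) => ((y.2.1, y.1), y.2.2)) := by
    rintro ⟨u1, u2, u3⟩ ⟨v1, v2, v3⟩ hy
    simp_all [Prod.ext_iff]
  have hs1 : prob μ (fun ω => (A ω, B ω, C ω)) (a, b, c)
      = ∑ x : α', prob μ (fun ω => ((A ω, A' ω), B ω, C ω)) ((a, x), b, c) := by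
    have e : ∀ x : α', prob μ (fun ω => ((A ω, A' ω), B ω, C ω)) ((a, x), b, c)
        = prob μ (fun ω => (A' ω, (A ω, B ω, C ω))) (x, (a, b, c)) := fun x => by
      exact prob_comp_inj μ (fun ω => (A' ω, (A ω, B ω, C ω))) hf1 (x, (a, b, c))
    rw [Finset.sum_congr rfl fun x _ => e x]
    exact prob_pair_sum μ (fun ω => (A ω, B ω, C ω)) A' (a, b, c)
  have hs2 : prob μ (fun ω => (A ω, B ω)) (a, b)
      = ∑ x : α', prob μ (fun ω => ((A ω, A' ω), B ω)) ((a, x), b) := by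
    have e : ∀ x : α', prob μ (fun ω => ((A ω, A' ω), B ω)) ((a, x), b)
        = prob μ (fun ω => (A' ω, (A ω, B ω))) (x, (a, b)) := fun x => by
      exact prob_comp_inj μ (fun ω => (A' ω, (A ω, B ω))) hf2 (x, (a, b))
    rw [Finset.sum_congr rfl fun x _ => e x]
    exact prob_pair_sum μ (fun ω => (A ω, B ω)) A' (a, b)
  rw [hs1, hs2, Finset.sum_mul, Finset.sum_mul]
  exact Finset.sum_congr rfl fun x _ => h (a, x) b c

lemma indep_marg_left (μ : Ω → ℝ) (V : Ω → α) (S₁ : Ω → β) (S₂ : Ω → γ)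
    (h : IndepRV μ V (fun ω => (S₁ ω, S₂ ω))) : IndepRV μ V S₁ := by
  intro v s₁
  have hf : Function.Injective (fun y : γ × (α × β) => (y.2.1, y.2.2, y.1)) := by
    rintro ⟨u1, u2, u3⟩ ⟨v1, v2, v3⟩ hy
    simp_all [Prod.ext_iff]
  have e : ∀ s₂ : γ, prob μ (fun ω => (S₂ ω, (V ω, S₁ ω))) (s₂, (v, s₁))
      = prob μ (fun ω => (V ω, S₁ ω, S₂ ω)) (v, s₁, s₂) := fun s₂ => by
    exact (prob_comp_inj μ (fun ω => (S₂ ω, (V ω, S₁ ω))) hf (s₂, (v, s₁))).symm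
  have m : ∀ s₂ : γ, prob μ (fun ω => (S₁ ω, S₂ ω)) (s₁, s₂)
      = prob μ (fun ω => (S₂ ω, S₁ ω)) (s₂, s₁) := fun s₂ => by
    exact prob_comp_inj μ (fun ω => (S₂ ω, S₁ ω)) Prod.swap_injective (s₂, s₁)
  calc prob μ (fun ω => (V ω, S₁ ω)) (v, s₁)
      = ∑ s₂, prob μ (fun ω => (S₂ ω, (V ω, S₁ ω))) (s₂, (v, s₁)) :=
        prob_pair_sum μ (fun ω => (V ω, S₁ ω)) S₂ (v, s₁)
    _ = ∑ s₂, prob μ (fun ω => (V ω, S₁ ω, S₂ ω)) (v, s₁, s₂) :=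
        Finset.sum_congr rfl fun s₂ _ => e s₂
    _ = ∑ s₂, prob μ V v * prob μ (fun ω => (S₁ ω, S₂ ω)) (s₁, s₂) :=
        Finset.sum_congr rfl fun s₂ _ => h v (s₁, s₂)
    _ = prob μ V v * ∑ s₂, prob μ (fun ω => (S₂ ω, S₁ ω)) (s₂, s₁) := by
        rw [Finset.mul_sum]
        exact Finset.sum_congr rfl fun s₂ _ => by rw [m s₂]
    _ = prob μ V v * prob μ S₁ s₁ := by
        rw [← prob_pair_sum μ S₁ S₂ s₁]

lemma indep_marg_right (μ : Ω → ℝ) (V : Ω → α) (S₁ : Ω → β) (S₂ : Ω → γ)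
    (h : IndepRV μ V (fun ω => (S₁ ω, S₂ ω))) : IndepRV μ V S₂ := by
  intro v s₂
  have hf : Function.Injective (fun y : β × (α × γ) => (y.2.1, y.1, y.2.2)) := by
    rintro ⟨u1, u2, u3⟩ ⟨v1, v2, v3⟩ hy
    simp_all [Prod.ext_iff]
  have e : ∀ s₁ : β, prob μ (fun ω => (S₁ ω, (V ω, S₂ ω))) (s₁, (v, s₂))
      = prob μ (fun ω => (V ω, S₁ ω, S₂ ω)) (v, s₁, s₂) := fun s₁ => by
    exact (prob_comp_inj μ (fun ω => (S₁ ω, (V ω, S₂ ω))) hf (s₁, (v, s₂))).symm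
  calc prob μ (fun ω => (V ω, S₂ ω)) (v, s₂)
      = ∑ s₁, prob μ (fun ω => (S₁ ω, (V ω, S₂ ω))) (s₁, (v, s₂)) :=
        prob_pair_sum μ (fun ω => (V ω, S₂ ω)) S₁ (v, s₂)
    _ = ∑ s₁, prob μ (fun ω => (V ω, S₁ ω, S₂ ω)) (v, s₁, s₂) :=
        Finset.sum_congr rfl fun s₁ _ => e s₁
    _ = ∑ s₁, prob μ V v * prob μ (fun ω => (S₁ ω, S₂ ω)) (s₁, s₂) :=
        Finset.sum_congr rfl fun s₁ _ => h v (s₁, s₂)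
    _ = prob μ V v * prob μ S₂ s₂ := by
        rw [← Finset.mul_sum, ← prob_pair_sum μ S₂ S₁ s₂]

end Marg

lemma entH_comp_inj₂ {Ω α β : Type*} [Fintype Ω] [Fintype α] [DecidableEq α]
    [Fintype β] [DecidableEq β] (μ : Ω → ℝ)
    (X : Ω → α) (Y : Ω → β) {f : α → β} (hf : Function.Injective f)
    (hXY : ∀ ω, Y ω = f (X ω)) : entH μ Y = entH μ X := by
  have hY : Y = fun ω => f (X ω) := funext hXY
  rw [hY]
  exact entH_comp_inj μ X hf

set_option maxHeartbeats 2000000 in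
/-- For a physically-degraded chain `V → X → (Y₁,S₁) → (Y₂,S₂)`
with `V` independent of `(S₁,S₂)`, we have `H(V|Y₂,S₂) ≥ H(V|Y₁,S₁)` and
`[I(V;Y₁|S₁) − I(V;Y₂|S₂)]⁺ = H(V|Y₂,S₂) − H(V|Y₁,S₁)`. -/
theorem physically_degraded_entropy_ineq
    {Ω 𝓥 𝓧 𝓨₁ 𝓢₁ 𝓨₂ 𝓢₂ : Type*} [Fintype Ω]
    [Fintype 𝓥] [DecidableEq 𝓥] [Fintype 𝓧] [DecidableEq 𝓧]
    [Fintype 𝓨₁] [DecidableEq 𝓨₁] [Fintype 𝓢₁] [DecidableEq 𝓢₁]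
    [Fintype 𝓨₂] [DecidableEq 𝓨₂] [Fintype 𝓢₂] [DecidableEq 𝓢₂]
    (μ : Ω → ℝ) (hμ : IsPMF μ)
    (V : Ω → 𝓥) (X : Ω → 𝓧) (Y₁ : Ω → 𝓨₁) (S₁ : Ω → 𝓢₁) (Y₂ : Ω → 𝓨₂) (S₂ : Ω → 𝓢₂)
    (hMarkov1 : MarkovChain μ V X (fun ω => (Y₁ ω, S₁ ω)))
    (hMarkov2 : MarkovChain μ (fun ω => (V ω, X ω)) (fun ω => (Y₁ ω, S₁ ω))
      (fun ω => (Y₂ ω, S₂ ω)))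
    (hInd : IndepRV μ V (fun ω => (S₁ ω, S₂ ω))) :
    condH μ V (fun ω => (Y₂ ω, S₂ ω)) ≥ condH μ V (fun ω => (Y₁ ω, S₁ ω)) ∧
    max (condMutInfo μ V Y₁ S₁ - condMutInfo μ V Y₂ S₂) 0
      = condH μ V (fun ω => (Y₂ ω, S₂ ω)) - condH μ V (fun ω => (Y₁ ω, S₁ ω)) := by
  -- abbreviations stay literal to keep defeq
  have hM : MarkovChain μ V (fun ω => (Y₁ ω, S₁ ω)) (fun ω => (Y₂ ω, S₂ ω)) :=
    markov_fst μ V X _ _ hMarkov2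
  -- swap/reassociation entropy identities
  have swap1 : entH μ (fun ω => ((Y₁ ω, S₁ ω), (Y₂ ω, S₂ ω)))
      = entH μ (fun ω => ((Y₂ ω, S₂ ω), (Y₁ ω, S₁ ω))) :=
    entH_comp_inj₂ μ (fun ω => ((Y₂ ω, S₂ ω), (Y₁ ω, S₁ ω)))
      (fun ω => ((Y₁ ω, S₁ ω), (Y₂ ω, S₂ ω))) Prod.swap_injective (fun ω => rfl)
  have hf2 : Function.Injective
      (fun y : 𝓥 × (𝓨₂ × 𝓢₂) × (𝓨₁ × 𝓢₁) => (y.1, y.2.2, y.2.1)) := by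
    rintro ⟨u1, u2, u3⟩ ⟨v1, v2, v3⟩ hy
    simp_all [Prod.ext_iff]
  have swap2 : entH μ (fun ω => (V ω, (Y₁ ω, S₁ ω), (Y₂ ω, S₂ ω)))
      = entH μ (fun ω => (V ω, (Y₂ ω, S₂ ω), (Y₁ ω, S₁ ω))) :=
    entH_comp_inj₂ μ (fun ω => (V ω, (Y₂ ω, S₂ ω), (Y₁ ω, S₁ ω)))
      (fun ω => (V ω, (Y₁ ω, S₁ ω), (Y₂ ω, S₂ ω))) hf2 (fun ω => rfl)
  -- data processing inequality part
  have h1 := (cmi_both μ hμ V (fun ω => (Y₂ ω, S₂ ω)) (fun ω => (Y₁ ω, S₁ ω))).1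
  have h2 := (cmi_both μ hμ V (fun ω => (Y₁ ω, S₁ ω)) (fun ω => (Y₂ ω, S₂ ω))).2 hM
  have hDPI : condH μ V (fun ω => (Y₂ ω, S₂ ω)) ≥ condH μ V (fun ω => (Y₁ ω, S₁ ω)) := by
    simp only [condH]
    linarith
  refine ⟨hDPI, ?_⟩
  -- independence parts
  have hI1 := indep_marg_left μ V S₁ S₂ hInd
  have hI2 := indep_marg_right μ V S₁ S₂ hInd
  have hE1 : entH μ (fun ω => (V ω, S₁ ω)) = entH μ V + entH μ S₁ := indep_entH hμ hI1
  have hE2 : entH μ (fun ω => (V ω, S₂ ω)) = entH μ V + entH μ S₂ := indep_entH hμ hI2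
  -- reassociation of ((V,Y),S) to (V,Y,S)
  have hg1 : Function.Injective
      (fun y : 𝓥 × 𝓨₁ × 𝓢₁ => ((y.1, y.2.1), y.2.2)) := by
    rintro ⟨u1, u2, u3⟩ ⟨v1, v2, v3⟩ hy
    simp_all [Prod.ext_iff]
  have hg2 : Function.Injective
      (fun y : 𝓥 × 𝓨₂ × 𝓢₂ => ((y.1, y.2.1), y.2.2)) := by
    rintro ⟨u1, u2, u3⟩ ⟨v1, v2, v3⟩ hy
    simp_all [Prod.ext_iff]
  have hA1 : entH μ (fun ω => ((V ω, Y₁ ω), S₁ ω)) = entH μ (fun ω => (V ω, Y₁ ω, S₁ ω)) :=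
    entH_comp_inj₂ μ (fun ω => (V ω, Y₁ ω, S₁ ω))
      (fun ω => ((V ω, Y₁ ω), S₁ ω)) hg1 (fun ω => rfl)
  have hA2 : entH μ (fun ω => ((V ω, Y₂ ω), S₂ ω)) = entH μ (fun ω => (V ω, Y₂ ω, S₂ ω)) :=
    entH_comp_inj₂ μ (fun ω => (V ω, Y₂ ω, S₂ ω))
      (fun ω => ((V ω, Y₂ ω), S₂ ω)) hg2 (fun ω => rfl)
  have c1 : condMutInfo μ V Y₁ S₁
      = entH μ V - condH μ V (fun ω => (Y₁ ω, S₁ ω)) := by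
    simp only [condMutInfo, condH]
    rw [hE1, hA1]
    ring
  have c2 : condMutInfo μ V Y₂ S₂
      = entH μ V - condH μ V (fun ω => (Y₂ ω, S₂ ω)) := by
    simp only [condMutInfo, condH]
    rw [hE2, hA2]
    ring
  rw [c1, c2, max_eq_left (by linarith)]
  ring
end

section
/- Let X ~ Bern(p) be independent of (S₁,S₂) where P(S₁=0,S₂=0)=1−q, P(S₁=1,S₂=1)=qα, P(S₁=1,S₂=0)=q(1−α), P(S₁=0,S₂=1)=0, and let Y₁ = S₁·X, Y₂ = S₂·X. Then H(Y₁,S₁|Y₂,S₂) − H(S₁|Y₁,Y₂,S₂,X) = q(1−α)·H_b(p) + p(1−qα)·H_b( q(1−α)/(1−qα) ). -/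
open Finset

noncomputable def eta (x : ℝ) : ℝ := x * Real.log x

lemma eta_mul (a b : ℝ) : eta (a * b) = a * eta b + b * eta a := by
  unfold eta
  rcases eq_or_ne a 0 with h|h; · simp [h]
  rcases eq_or_ne b 0 with h'|h'; · simp [h']
  rw [Real.log_mul h h']; ring

lemma prob_comp {Ω A B : Type*} [Fintype Ω] [Fintype A] [DecidableEq A] [DecidableEq B]
    (μ : Ω → ℝ) (T : Ω → A) (f : A → B) (b : B) :
    prob μ (fun ω => f (T ω)) b = ∑ t ∈ Finset.univ.filter (fun t => f t = b), prob μ T t := by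
  unfold prob; rw [Finset.sum_fiberwise_eq_sum_filter]; simp

lemma entH_comp {Ω A B : Type*} [Fintype Ω] [Fintype A] [DecidableEq A] [Fintype B] [DecidableEq B]
    (μ : Ω → ℝ) (T : Ω → A) (f : A → B) :
    entH μ (fun ω => f (T ω)) = ∑ b, -((∑ t ∈ Finset.univ.filter (fun t => f t = b), prob μ T t)
      * Real.log (∑ t ∈ Finset.univ.filter (fun t => f t = b), prob μ T t)) := by
  unfold entH; simp only [prob_comp]

/-- For the binary JCAS channel with multiplicative Bernoulli
states, `H(Y₁,S₁|Y₂,S₂) − H(S₁|Y₁,Y₂,S₂,X)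
  = q(1−α)·H_b(p) + p(1−qα)·H_b(q(1−α)/(1−qα))`. -/
theorem binary_JCAS_secrecy_rate
    {Ω : Type*} [Fintype Ω]
    (p q α : ℝ) (hp : p ∈ Set.Icc (0:ℝ) 1) (hq : q ∈ Set.Icc (0:ℝ) 1)
    (hα : α ∈ Set.Icc (0:ℝ) 1) (hqα : q * α < 1)
    (μ : Ω → ℝ) (hμ : IsPMF μ)
    (X S₁ S₂ : Ω → Bool)
    (hX : prob μ X true = p)
    (hS : prob μ (fun ω => (S₁ ω, S₂ ω)) (false, false) = 1 - q ∧
          prob μ (fun ω => (S₁ ω, S₂ ω)) (true, true) = q * α ∧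
          prob μ (fun ω => (S₁ ω, S₂ ω)) (false, true) = 0 ∧
          prob μ (fun ω => (S₁ ω, S₂ ω)) (true, false) = q * (1 - α))
    (hInd : IndepRV μ X (fun ω => (S₁ ω, S₂ ω)))
    (Y₁ Y₂ : Ω → Bool) (hY₁ : ∀ ω, Y₁ ω = (S₁ ω && X ω))
    (hY₂ : ∀ ω, Y₂ ω = (S₂ ω && X ω)) :
    condH μ (fun ω => (Y₁ ω, S₁ ω)) (fun ω => (Y₂ ω, S₂ ω))
      - condH μ S₁ (fun ω => (Y₁ ω, Y₂ ω, S₂ ω, X ω))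
    = q * (1 - α) * binEnt p
      + p * (1 - q * α) * binEnt (q * (1 - α) / (1 - q * α)) := by
  obtain ⟨hS00, hS11, hS01, hS10⟩ := hS
  have hsum : prob μ X false + prob μ X true = 1 := by
    unfold prob
    rw [← hμ.2, ← Finset.sum_filter_add_sum_filter_not Finset.univ (fun ω => X ω = false) μ]
    congr 1
    apply Finset.sum_congr _ (fun _ _ => rfl)
    ext ω; simp
  have hXf : prob μ X false = 1 - p := by rw [hX] at hsum; linarith
  have hP : ∀ x s1 s2 : Bool, prob μ (fun ω => (X ω, S₁ ω, S₂ ω)) (x, s1, s2)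
      = (if x then p else 1 - p) * (if s1 then (if s2 then q*α else q*(1-α)) else (if s2 then 0 else 1-q)) := by
    intro x s1 s2
    rw [hInd x (s1, s2)]
    cases x <;> cases s1 <;> cases s2 <;>
      simp [hX, hXf, hS00, hS11, hS01, hS10]
  have key : ∀ {B : Type} [Fintype B] [DecidableEq B] (f : Bool×Bool×Bool → B),
      entH μ (fun ω => f (X ω, S₁ ω, S₂ ω)) = ∑ b, -((∑ t ∈ Finset.univ.filter (fun t => f t = b),
        prob μ (fun ω => (X ω, S₁ ω, S₂ ω)) t)
      * Real.log (∑ t ∈ Finset.univ.filter (fun t => f t = b), prob μ (fun ω => (X ω, S₁ ω, S₂ ω)) t)) :=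
    fun f => entH_comp μ _ f
  have hE1 : entH μ (fun ω => ((Y₁ ω, S₁ ω), (Y₂ ω, S₂ ω)))
      = -(eta (p*(q*α))) - eta (p*(q*(1-α))) - eta ((1-p)*(q*α)) - eta ((1-p)*(q*(1-α))) - eta (1-q) := by
    have hw : (fun ω => ((Y₁ ω, S₁ ω), (Y₂ ω, S₂ ω)))
        = (fun ω => (fun t : Bool×Bool×Bool => ((t.2.1 && t.1, t.2.1), (t.2.2 && t.1, t.2.2))) (X ω, S₁ ω, S₂ ω)) := by
      funext ω; simp [hY₁, hY₂]
    rw [hw, key (fun t : Bool×Bool×Bool => ((t.2.1 && t.1, t.2.1), (t.2.2 && t.1, t.2.2)))]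
    simp only [Finset.sum_filter, Fintype.sum_prod_type, Fintype.sum_bool, hP]
    norm_num [Prod.mk.injEq]
    rw [show p * (1 - q) + (1 - p) * (1 - q) = 1 - q by ring]
    simp only [eta]; ring
  have hE2 : entH μ (fun ω => (Y₂ ω, S₂ ω))
      = -(eta (p*(q*α))) - eta ((1-p)*(q*α)) - eta (1-q*α) := by
    have hw : (fun ω => (Y₂ ω, S₂ ω))
        = (fun ω => (fun t : Bool×Bool×Bool => (t.2.2 && t.1, t.2.2)) (X ω, S₁ ω, S₂ ω)) := by
      funext ω; simp [hY₂]
    rw [hw, key (fun t : Bool×Bool×Bool => (t.2.2 && t.1, t.2.2))]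
    simp only [Finset.sum_filter, Fintype.sum_prod_type, Fintype.sum_bool, hP]
    norm_num [Prod.mk.injEq]
    rw [show p * (q * (1 - α)) + p * (1 - q) + ((1 - p) * (q * (1 - α)) + (1 - p) * (1 - q)) = 1 - q*α by ring]
    simp only [eta]; ring
  have hE3 : entH μ (fun ω => (S₁ ω, (Y₁ ω, Y₂ ω, S₂ ω, X ω)))
      = -(eta (p*(q*α))) - eta (p*(q*(1-α))) - eta ((1-p)*(q*α)) - eta ((1-p)*(q*(1-α)))
        - eta (p*(1-q)) - eta ((1-p)*(1-q)) := by
    have hw : (fun ω => (S₁ ω, (Y₁ ω, Y₂ ω, S₂ ω, X ω)))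
        = (fun ω => (fun t : Bool×Bool×Bool => (t.2.1, (t.2.1 && t.1, t.2.2 && t.1, t.2.2, t.1))) (X ω, S₁ ω, S₂ ω)) := by
      funext ω; simp [hY₁, hY₂]
    rw [hw, key (fun t : Bool×Bool×Bool => (t.2.1, (t.2.1 && t.1, t.2.2 && t.1, t.2.2, t.1)))]
    simp only [Finset.sum_filter, Fintype.sum_prod_type, Fintype.sum_bool, hP]
    norm_num [Prod.mk.injEq]
    simp only [eta]; ring
  have hE4 : entH μ (fun ω => (Y₁ ω, Y₂ ω, S₂ ω, X ω))
      = -(eta (p*(q*α))) - eta (p*(q*(1-α))) - eta ((1-p)*(q*α))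
        - eta (p*(1-q)) - eta ((1-p)*(1-q*α)) := by
    have hw : (fun ω => (Y₁ ω, Y₂ ω, S₂ ω, X ω))
        = (fun ω => (fun t : Bool×Bool×Bool => (t.2.1 && t.1, t.2.2 && t.1, t.2.2, t.1)) (X ω, S₁ ω, S₂ ω)) := by
      funext ω; simp [hY₁, hY₂]
    rw [hw, key (fun t : Bool×Bool×Bool => (t.2.1 && t.1, t.2.2 && t.1, t.2.2, t.1))]
    simp only [Finset.sum_filter, Fintype.sum_prod_type, Fintype.sum_bool, hP]
    norm_num [Prod.mk.injEq]
    rw [show (1 - p) * (q * (1 - α)) + (1 - p) * (1 - q) = (1-p)*(1-q*α) by ring]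
    simp only [eta]; ring
  have hγ : (1:ℝ) - q * α ≠ 0 := by nlinarith
  have e1 : eta (q*(1-α)) = (1-q*α) * eta (q*(1-α)/(1-q*α)) + (q*(1-α)/(1-q*α)) * eta (1-q*α) := by
    conv_lhs => rw [show q*(1-α) = (1-q*α) * (q*(1-α)/(1-q*α)) by field_simp]
    exact eta_mul _ _
  have e2 : eta (1-q) = (1-q*α) * eta (1 - q*(1-α)/(1-q*α)) + (1 - q*(1-α)/(1-q*α)) * eta (1-q*α) := by
    conv_lhs => rw [show (1-q) = (1-q*α) * (1 - q*(1-α)/(1-q*α)) by field_simp; ring]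
    exact eta_mul _ _
  have m1 := eta_mul p (q*(1-α))
  have m2 := eta_mul (1-p) (1-q)
  have m3 := eta_mul (1-p) (1-q*α)
  simp only [condH]
  rw [hE1, hE2, hE3, hE4]
  simp only [show ∀ x:ℝ, binEnt x = -(eta x) - eta (1-x) from fun _ => rfl]
  linear_combination (-1)*m1 + m2 - m3 + (-p)*e1 + (-p)*e2
end
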